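/- Properties of the regularized entropy potential F_ε: F_ε is twice continuously differentiable on ℝ with F_ε''(s) ≥ 0 for all s (convexity), F_ε' is non-decreasing on ℝ; F_ε(s) ≥ 0 for all s ∈ ℝ; and F_ε(s) ≥ s²/(2ε) for every s ≤ 0. (The last inequality yields the approximate-positivity estimate with rate O(√ε) in L² for the negative part.) -/

import Mathlib

open Set Filter Real

/-- The C² regularization `F_ε` of the entropy potential `F(s) = s log s − s + 1`. -/
noncomputable def Feps (ε : ℝ) (s : ℝ) : ℝ :=
  if s ≤ ε then
    ε * Real.log ε - ε + 1 + Real.log ε * (s - ε) + (s - ε)^2/(2*ε)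
  else if s ≤ 1/ε then
    s * Real.log s - s + 1
  else
    (1/ε) * Real.log (1/ε) - 1/ε + 1 + Real.log (1/ε) * (s - 1/ε) + ε*(s - 1/ε)^2/2

/-- The first derivative of `Feps`. -/
noncomputable def Fg (ε s : ℝ) : ℝ :=
  if s ≤ ε then Real.log ε + (s - ε)/ε
  else if s ≤ 1/ε then Real.log s
  else Real.log (1/ε) + ε*(s - 1/ε)

/-- The second derivative of `Feps`. -/
noncomputable def Fh (ε s : ℝ) : ℝ :=
  if s ≤ ε then 1/ε else if s ≤ 1/ε then 1/s else ε

/-- Gluing lemma: a function equal to `fL` on the left of `a` and `fR` on the right,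
with matching values and derivatives, is differentiable at `a`. -/
lemma glueDeriv {f fL fR : ℝ → ℝ} {d a c b : ℝ} (hca : c < a) (hab : a < b)
    (hL : HasDerivAt fL d a) (hR : HasDerivAt fR d a)
    (hfL : ∀ x, c < x → x ≤ a → f x = fL x)
    (hfR : ∀ x, a < x → x < b → f x = fR x)
    (heq : fL a = fR a) : HasDerivAt f d a := by
  have hfa : f a = fL a := hfL a hca le_rfl
  have h1 : HasDerivWithinAt f d (Iic a) a := by
    refine (hL.hasDerivWithinAt).congr_of_eventuallyEq ?_ hfa
    have hmem : Iic a ∩ Ioi c ∈ nhdsWithin a (Iic a) :=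
      inter_mem_nhdsWithin _ (Ioi_mem_nhds hca)
    filter_upwards [hmem] with x hx using hfL x hx.2 hx.1
  have h2 : HasDerivWithinAt f d (Ici a) a := by
    refine (hR.hasDerivWithinAt).congr_of_eventuallyEq ?_ (hfa.trans heq)
    have hmem : Ici a ∩ Iio b ∈ nhdsWithin a (Ici a) :=
      inter_mem_nhdsWithin _ (Iio_mem_nhds hab)
    filter_upwards [hmem] with x hx
    rcases eq_or_lt_of_le (mem_Ici.1 hx.1) with h | h
    · rw [← h, hfa, heq]
    · exact hfR x h hx.2
  have := h1.union h2
  rw [Iic_union_Ici] at this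
  exact hasDerivWithinAt_univ.1 this

lemma localDeriv {f fL : ℝ → ℝ} {d a : ℝ} {U : Set ℝ} (hU : U ∈ nhds a)
    (h : ∀ x ∈ U, f x = fL x) (hL : HasDerivAt fL d a) : HasDerivAt f d a :=
  hL.congr_of_eventuallyEq (by filter_upwards [hU] with x hx using h x hx)

section pieces
variable (ε : ℝ)

lemma hasDerivAt_f1 (hε0 : 0 < ε) (s : ℝ) :
    HasDerivAt (fun x : ℝ => ε * Real.log ε - ε + 1 + Real.log ε * (x - ε) + (x - ε)^2/(2*ε))
      (Real.log ε + (s - ε)/ε) s := by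
  have hx : HasDerivAt (fun x : ℝ => x - ε) 1 s := (hasDerivAt_id s).sub_const ε
  have h2 : HasDerivAt (fun x : ℝ => (x - ε)^2) (2*(s-ε)) s := by
    have := hx.fun_pow 2
    simpa using this
  have := ((hx.const_mul (Real.log ε)).const_add (ε * Real.log ε - ε + 1)).fun_add
    (h2.div_const (2*ε))
  refine this.congr_deriv ?_
  field_simp

lemma hasDerivAt_f2 {s : ℝ} (hs : 0 < s) :
    HasDerivAt (fun x : ℝ => x * Real.log x - x + 1) (Real.log s) s := by
  have := (((hasDerivAt_id s).fun_mul (Real.hasDerivAt_log hs.ne')).fun_sub (hasDerivAt_id s)).add_const 1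
  refine this.congr_deriv ?_
  simp only [id_eq]
  field_simp
  ring

lemma hasDerivAt_f3 (s : ℝ) :
    HasDerivAt (fun x : ℝ => (1/ε) * Real.log (1/ε) - 1/ε + 1 + Real.log (1/ε) * (x - 1/ε)
      + ε*(x - 1/ε)^2/2) (Real.log (1/ε) + ε*(s - 1/ε)) s := by
  have hx : HasDerivAt (fun x : ℝ => x - 1/ε) 1 s := (hasDerivAt_id s).sub_const (1/ε)
  have h2 : HasDerivAt (fun x : ℝ => (x - 1/ε)^2) (2*(s-1/ε)) s := by
    have := hx.fun_pow 2
    simpa using this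
  have := ((hx.const_mul (Real.log (1/ε))).const_add ((1/ε) * Real.log (1/ε) - 1/ε + 1)).fun_add
    ((h2.const_mul ε).div_const 2)
  refine this.congr_deriv ?_
  ring

end pieces

lemma hasDerivAt_Feps {ε : ℝ} (hε0 : 0 < ε) (hε1 : ε < 1) (s : ℝ) :
    HasDerivAt (Feps ε) (Fg ε s) s := by
  have hinv : 1 < 1/ε := one_lt_one_div hε0 hε1
  have hεinv : ε < 1/ε := lt_trans hε1 hinv
  rcases lt_trichotomy s ε with h | h | h
  · rw [Fg, if_pos h.le]
    refine localDeriv (Iio_mem_nhds h) (fun x hx => ?_) (hasDerivAt_f1 ε hε0 s)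
    rw [Feps, if_pos (le_of_lt hx)]
  · subst s
    rw [Fg, if_pos le_rfl]
    have hd1 : HasDerivAt (fun x : ℝ => ε * Real.log ε - ε + 1 + Real.log ε * (x - ε)
        + (x - ε)^2/(2*ε)) (Real.log ε) ε := by
      have := hasDerivAt_f1 ε hε0 ε
      simpa using this
    have hd2 : HasDerivAt (fun x : ℝ => x * Real.log x - x + 1) (Real.log ε) ε :=
      hasDerivAt_f2 hε0
    have key : HasDerivAt (Feps ε) (Real.log ε) ε := by
      refine glueDeriv (c := ε - 1) (by linarith) hεinv hd1 hd2
        (fun x _ hx => by rw [Feps, if_pos hx])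
        (fun x hx hx' => by rw [Feps, if_neg (not_le.2 hx), if_pos hx'.le]) ?_
      simp
      try ring
    simpa using key
  · rcases lt_trichotomy s (1/ε) with h2 | h2 | h2
    · rw [Fg, if_neg (not_le.2 h), if_pos h2.le]
      refine localDeriv (Ioo_mem_nhds h h2) (fun x hx => ?_) (hasDerivAt_f2 (lt_trans hε0 h))
      rw [Feps, if_neg (not_le.2 hx.1), if_pos hx.2.le]
    · subst s
      rw [Fg, if_neg (not_le.2 h), if_pos le_rfl]
      have hd2 : HasDerivAt (fun x : ℝ => x * Real.log x - x + 1) (Real.log (1/ε)) (1/ε) :=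
        hasDerivAt_f2 (by positivity)
      have hd3 : HasDerivAt (fun x : ℝ => (1/ε) * Real.log (1/ε) - 1/ε + 1
          + Real.log (1/ε) * (x - 1/ε) + ε*(x - 1/ε)^2/2) (Real.log (1/ε)) (1/ε) := by
        have := hasDerivAt_f3 ε (1/ε)
        simpa using this
      refine glueDeriv (b := 1/ε + 1) h (by linarith) hd2 hd3
        (fun x hx hx' => by rw [Feps, if_neg (not_le.2 hx), if_pos hx'])
        (fun x hx _ => by
          rw [Feps, if_neg (not_le.2 (lt_trans hεinv hx)), if_neg (not_le.2 hx)]) ?_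
      simp
      try ring
    · rw [Fg, if_neg (not_le.2 h), if_neg (not_le.2 h2)]
      refine localDeriv (Ioi_mem_nhds h2) (fun x hx => ?_) (hasDerivAt_f3 ε s)
      rw [Feps, if_neg (not_le.2 (lt_trans hεinv hx)), if_neg (not_le.2 hx)]

lemma hasDerivAt_Fg {ε : ℝ} (hε0 : 0 < ε) (hε1 : ε < 1) (s : ℝ) :
    HasDerivAt (Fg ε) (Fh ε s) s := by
  have hinv : 1 < 1/ε := one_lt_one_div hε0 hε1
  have hεinv : ε < 1/ε := lt_trans hε1 hinv
  have hg1 : ∀ t : ℝ, HasDerivAt (fun x : ℝ => Real.log ε + (x - ε)/ε) (1/ε) t := by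
    intro t
    have := (((hasDerivAt_id t).sub_const ε).div_const ε).const_add (Real.log ε)
    simpa [one_div] using this
  have hg3 : ∀ t : ℝ, HasDerivAt (fun x : ℝ => Real.log (1/ε) + ε*(x - 1/ε)) ε t := by
    intro t
    have := (((hasDerivAt_id t).sub_const (1/ε)).const_mul ε).const_add (Real.log (1/ε))
    simpa using this
  rcases lt_trichotomy s ε with h | h | h
  · rw [Fh, if_pos h.le]
    refine localDeriv (Iio_mem_nhds h) (fun x hx => ?_) (hg1 s)
    rw [Fg, if_pos (le_of_lt hx)]
  · subst s
    rw [Fh, if_pos le_rfl]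
    have hd2 : HasDerivAt Real.log (1/ε) ε := by
      simpa [one_div] using Real.hasDerivAt_log hε0.ne'
    refine glueDeriv (c := ε - 1) (by linarith) hεinv (hg1 ε) hd2
      (fun x _ hx => by rw [Fg, if_pos hx])
      (fun x hx hx' => by rw [Fg, if_neg (not_le.2 hx), if_pos hx'.le]) ?_
    simp
  · rcases lt_trichotomy s (1/ε) with h2 | h2 | h2
    · rw [Fh, if_neg (not_le.2 h), if_pos h2.le]
      have hd2 : HasDerivAt Real.log (1/s) s := by
        simpa [one_div] using Real.hasDerivAt_log (ne_of_gt (lt_trans hε0 h))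
      refine localDeriv (Ioo_mem_nhds h h2) (fun x hx => ?_) hd2
      rw [Fg, if_neg (not_le.2 hx.1), if_pos hx.2.le]
    · subst s
      rw [Fh, if_neg (not_le.2 h), if_pos le_rfl, one_div_one_div]
      have hd2 : HasDerivAt Real.log ε (1/ε) := by
        have h0 : (1/ε : ℝ) ≠ 0 := by positivity
        have := Real.hasDerivAt_log h0
        simpa [one_div] using this
      refine glueDeriv (b := 1/ε + 1) h (by linarith) hd2 (hg3 (1/ε))
        (fun x hx hx' => by rw [Fg, if_neg (not_le.2 hx), if_pos hx'])
        (fun x hx _ => by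
          rw [Fg, if_neg (not_le.2 (lt_trans hεinv hx)), if_neg (not_le.2 hx)]) ?_
      simp
    · rw [Fh, if_neg (not_le.2 h), if_neg (not_le.2 h2)]
      refine localDeriv (Ioi_mem_nhds h2) (fun x hx => ?_) (hg3 s)
      rw [Fg, if_neg (not_le.2 (lt_trans hεinv hx)), if_neg (not_le.2 hx)]

lemma Fh_eq {ε : ℝ} (hε0 : 0 < ε) (hε1 : ε < 1) :
    Fh ε = fun s => (max ε (min s (1/ε)))⁻¹ := by
  have hεinv : ε ≤ 1/ε := le_of_lt (lt_trans hε1 (one_lt_one_div hε0 hε1))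
  funext s
  rw [Fh]
  split_ifs with h h2
  · rw [min_eq_left (le_trans h hεinv), max_eq_left h, one_div]
  · rw [min_eq_left h2, max_eq_right (le_of_lt (not_le.1 h)), one_div]
  · rw [min_eq_right (le_of_lt (not_le.1 h2)), max_eq_right hεinv]
    rw [one_div, inv_inv]

lemma Fh_nonneg {ε : ℝ} (hε0 : 0 < ε) (s : ℝ) : 0 ≤ Fh ε s := by
  rw [Fh]
  split_ifs with h h2
  · positivity
  · have : 0 < s := lt_trans hε0 (not_le.1 h)
    positivity
  · exact hε0.le

theorem Feps_properties (ε : ℝ) (hε0 : 0 < ε) (hε1 : ε ≤ 1) :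
    ContDiff ℝ 2 (Feps ε) ∧
    (∀ s : ℝ, 0 ≤ deriv (deriv (Feps ε)) s) ∧
    Monotone (deriv (Feps ε)) ∧
    (∀ s : ℝ, 0 ≤ Feps ε s) ∧
    (∀ s : ℝ, s ≤ 0 → s^2/(2*ε) ≤ Feps ε s) := by
  -- the last inequality holds for all ε ∈ (0,1]
  have h5 : ∀ s : ℝ, s ≤ 0 → s^2/(2*ε) ≤ Feps ε s := by
    intro s hs
    rw [Feps, if_pos (le_trans hs hε0.le)]
    have hlog : Real.log ε ≤ 0 := Real.log_nonpos hε0.le hε1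
    have hkey : ε * Real.log ε - ε + 1 + Real.log ε * (s - ε) + (s - ε)^2/(2*ε)
        - s^2/(2*ε) = (Real.log ε - 1)*s + 1 - ε/2 := by
      field_simp
      ring
    have hp : 0 ≤ (Real.log ε - 1)*s := by
      have := mul_nonneg (by linarith : 0 ≤ -(Real.log ε - 1)) (by linarith : 0 ≤ -s)
      nlinarith
    linarith [hkey, hp]
  rcases eq_or_lt_of_le hε1 with heq | hlt
  · -- case ε = 1 : Feps 1 s = (s-1)²/2
    subst heq
    have hFeq : Feps 1 = fun s => (s-1)^2/2 := by
      funext s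
      rw [Feps]
      split_ifs with h h2
      · simp [Real.log_one]
        try ring
      · norm_num at h h2
        try linarith
      · norm_num [Real.log_one]
        try ring
    have hd1 : deriv (Feps 1) = fun s => s - 1 := by
      funext s
      rw [hFeq]
      have : HasDerivAt (fun s : ℝ => (s-1)^2/2) (s - 1) s := by
        have hx : HasDerivAt (fun x : ℝ => x - 1) 1 s := (hasDerivAt_id s).sub_const 1
        have := (hx.fun_pow 2).div_const 2
        refine this.congr_deriv ?_
        simp
        try ring
      exact this.deriv
    have hd2 : deriv (deriv (Feps 1)) = fun _ => 1 := by
      rw [hd1]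
      funext s
      exact ((hasDerivAt_id s).sub_const 1).deriv
    refine ⟨?_, ?_, ?_, ?_, h5⟩
    · rw [hFeq]
      exact ((contDiff_id.sub contDiff_const).pow 2).div_const 2
    · intro s; rw [hd2]; norm_num
    · rw [hd1]; exact fun a b hab => by simpa using hab
    · intro s; rw [hFeq]; positivity
  · -- case ε < 1
    have hinv : 1 < 1/ε := one_lt_one_div hε0 hlt
    have hg := hasDerivAt_Feps hε0 hlt
    have hh := hasDerivAt_Fg hε0 hlt
    have hdiff : Differentiable ℝ (Feps ε) := fun s => (hg s).differentiableAt
    have hdiffg : Differentiable ℝ (Fg ε) := fun s => (hh s).differentiableAt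
    have hderiv : deriv (Feps ε) = Fg ε := funext fun s => (hg s).deriv
    have hderiv2 : deriv (Fg ε) = Fh ε := funext fun s => (hh s).deriv
    have hcont : Continuous (Fh ε) := by
      rw [Fh_eq hε0 hlt]
      refine (continuous_const.max (continuous_id.min continuous_const)).inv₀ ?_
      intro x
      have : ε ≤ max ε (min x (1/ε)) := le_max_left _ _
      positivity
    have hmono_g : Monotone (Fg ε) :=
      monotone_of_deriv_nonneg hdiffg (fun s => by rw [hderiv2]; exact Fh_nonneg hε0 s)
    have hg1 : Fg ε 1 = 0 := by
      rw [Fg, if_neg (not_le.2 hlt), if_pos hinv.le, Real.log_one]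
    have hFeps1 : Feps ε 1 = 0 := by
      rw [Feps, if_neg (not_le.2 hlt), if_pos hinv.le, Real.log_one]
      ring
    refine ⟨?_, ?_, ?_, ?_, h5⟩
    · rw [show (2 : WithTop ℕ∞) = 1 + 1 by norm_num]
      refine contDiff_succ_iff_deriv.2 ⟨hdiff, by simp, ?_⟩
      rw [hderiv, show (1 : WithTop ℕ∞) = 0 + 1 by norm_num]
      refine contDiff_succ_iff_deriv.2 ⟨hdiffg, by simp, ?_⟩
      rw [hderiv2, contDiff_zero]
      exact hcont
    · intro s
      rw [hderiv, hderiv2]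
      exact Fh_nonneg hε0 s
    · rw [hderiv]; exact hmono_g
    · intro s
      have hmonoF : MonotoneOn (Feps ε) (Ici 1) := by
        refine monotoneOn_of_deriv_nonneg (convex_Ici 1) hdiff.continuous.continuousOn
          hdiff.differentiableOn (fun x hx => ?_)
        rw [hderiv]
        rw [interior_Ici] at hx
        rw [← hg1]
        exact hmono_g (le_of_lt hx)
      have hantiF : AntitoneOn (Feps ε) (Iic 1) := by
        refine antitoneOn_of_deriv_nonpos (convex_Iic 1) hdiff.continuous.continuousOn
          hdiff.differentiableOn (fun x hx => ?_)
        rw [hderiv]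
        rw [interior_Iic] at hx
        rw [← hg1]
        exact hmono_g (le_of_lt hx)
      rcases le_total s 1 with h | h
      · have := hantiF (mem_Iic.2 h) (mem_Iic.2 le_rfl) h
        rw [hFeps1] at this
        exact this
      · have := hmonoF (mem_Ici.2 le_rfl) (mem_Ici.2 h) h
        rw [hFeps1] at this
        exact this
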